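/- In the static team problem, let q^i : Ω → ℝ^{d_i} be P-integrable random vectors for i = 1, …, N (in the paper, q^i(ω) = ∇_{u^i} L(γ^o(ω), ω)), and let γ^o be an admissible strategy profile such that ω ↦ ⟨q^i(ω), γ^i(ω) − γ^{i,o}(ω)⟩ is P-integrable for every admissible γ. Suppose the joint variational inequality holds: E[ Σ_{i=1}^N ⟨q^i(ω), γ^i(ω) − γ^{i,o}(ω)⟩ ] ≥ 0 for every admissible strategy profile γ. Then the component-wise conditional variational inequalities hold: for each i ∈ {1, …, N} and each fixed action a ∈ A^i, ⟨E[q^i | G^i](ω), a − γ^{i,o}(ω)⟩ ≥ 0 for P-a.e. ω. -/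

import Mathlib

open MeasureTheory
open scoped RealInnerProductSpace

lemma condexp_euclidean_coord_aux {Ω : Type*} {m m0 : MeasurableSpace Ω} (P : Measure Ω)
    [IsFiniteMeasure P] {n : ℕ} (hm : m ≤ m0)
    (q : Ω → EuclideanSpace ℝ (Fin n)) (hq : Integrable q P) (k : Fin n) :
    (fun ω => (P[q|m]) ω k) =ᵐ[P] P[fun ω => q ω k|m] := by
  refine ae_eq_condExp_of_forall_setIntegral_eq hm
    ((EuclideanSpace.proj k (𝕜 := ℝ)).integrable_comp hq)
    (fun s hs hμs => ((EuclideanSpace.proj k (𝕜 := ℝ)).integrable_comp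
      (integrable_condExp (f := q) (m := m))).integrableOn) (fun s hs hμs => ?_) ?_
  · have h1 := (EuclideanSpace.proj k (𝕜 := ℝ)).integral_comp_comm
      ((integrable_condExp (f := q) (m := m) (μ := P)).integrableOn (s := s))
    have h2 := (EuclideanSpace.proj k (𝕜 := ℝ)).integral_comp_comm
      (hq.integrableOn (s := s))
    simp only [PiLp.proj_apply] at h1 h2
    rw [show (fun x => (P[q|m]) x k) = fun x => (P[q|m]) x k from rfl]
    rw [h1, h2, setIntegral_condExp hm hq hs]
  · exact StronglyMeasurable.aestronglyMeasurable
      ((EuclideanSpace.proj k (𝕜 := ℝ)).continuous.comp_stronglyMeasurable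
      (stronglyMeasurable_condExp (f := q) (m := m)))

lemma euclid_abs_coord_le_norm {n : ℕ} (x : EuclideanSpace ℝ (Fin n)) (k : Fin n) :
    |x k| ≤ ‖x‖ := by
  rw [EuclideanSpace.norm_eq, ← Real.sqrt_sq_eq_abs]
  refine Real.sqrt_le_sqrt ?_
  have : (x k) ^ 2 = ‖x k‖ ^ 2 := by rw [Real.norm_eq_abs, sq_abs]
  rw [this]
  exact Finset.single_le_sum (f := fun j => ‖x j‖ ^ 2)
    (fun j _ => sq_nonneg _) (Finset.mem_univ k)

/-- **From the joint variational inequality to component-wise conditional variational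
inequalities.**  In the static team problem, let `q i : Ω → ℝ^{d i}` be P-integrable
(in the paper, `q i ω = ∇_{uⁱ} L (γᵒ ω, ω)`) and let `γᵒ` be admissible such that
`ω ↦ ⟪q i ω, γ i ω − γᵒ i ω⟫` is P-integrable for every admissible `γ` and every `i`.
If `E[ Σᵢ ⟪qⁱ, γⁱ − γ^{i,o}⟫ ] ≥ 0` for every admissible strategy profile `γ`, then
for each decision maker `i` and each fixed action `a ∈ A i`,
`⟪E[qⁱ | Gⁱ](ω), a − γ^{i,o}(ω)⟫ ≥ 0` for P-a.e. `ω`. -/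
theorem static_team_joint_VI_implies_conditional_VI
    {Ω : Type*} [MeasurableSpace Ω] (P : Measure Ω) [IsProbabilityMeasure P]
    {N : ℕ} {d : Fin N → ℕ}
    (A : ∀ i, Set (EuclideanSpace ℝ (Fin (d i))))
    (hAne : ∀ i, (A i).Nonempty) (hAconv : ∀ i, Convex ℝ (A i))
    (hAmeas : ∀ i, MeasurableSet (A i))
    (G : Fin N → MeasurableSpace Ω) (hG : ∀ i, G i ≤ ‹MeasurableSpace Ω›)
    -- admissible strategy profiles:
    (Admissible : (Ω → ∀ i, EuclideanSpace ℝ (Fin (d i))) → Prop)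
    (hAdm : ∀ γ, Admissible γ ↔
      (∀ i, Measurable[G i] fun ω => γ ω i) ∧ ∀ ω, ∀ i, γ ω i ∈ A i)
    (γo : Ω → ∀ i, EuclideanSpace ℝ (Fin (d i)))
    (hγoAdm : Admissible γo)
    -- the integrable random vectors `qⁱ`:
    (q : ∀ i, Ω → EuclideanSpace ℝ (Fin (d i)))
    (hqInt : ∀ i, Integrable (q i) P)
    -- integrability of the directional terms:
    (hdirInt : ∀ γ, Admissible γ → ∀ i,
      Integrable (fun ω => ⟪q i ω, γ ω i - γo ω i⟫) P)
    -- the joint variational inequality: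
    (hVI : ∀ γ, Admissible γ →
      0 ≤ ∫ ω, ∑ i, ⟪q i ω, γ ω i - γo ω i⟫ ∂P) :
    -- conclusion: the component-wise conditional variational inequalities
    ∀ i : Fin N, ∀ a ∈ A i,
      ∀ᵐ ω ∂P, 0 ≤ ⟪(P[q i | G i]) ω, a - γo ω i⟫ := by
  classical
  intro i a ha
  obtain ⟨hγoMeas, hγoMem⟩ := (hAdm γo).mp hγoAdm
  have hm := hG i
  set f : Ω → ℝ := fun ω => ⟪(P[q i | G i]) ω, a - γo ω i⟫ with hfdef
  -- measurability of f with respect to G i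
  have hcondInt : Integrable (P[q i | G i]) P := integrable_condExp
  have hcondSM : StronglyMeasurable[G i] (P[q i | G i]) := stronglyMeasurable_condExp
  have hcm : Measurable[G i] fun ω => a - γo ω i := measurable_const.sub (hγoMeas i)
  have hfm : Measurable[G i] f := by
    apply Measurable.inner
    · exact hcondSM.measurable
    · exact hcm
  -- the truncation sets
  set B : ℕ → Set Ω := fun n => {ω | f ω < 0} ∩ {ω | ‖γo ω i‖ ≤ (n : ℝ)} with hBdef
  have hB : ∀ n, MeasurableSet[G i] (B n) := by
    intro n
    refine (measurableSet_lt hfm measurable_const).inter ?_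
    have hset : {ω | ‖γo ω i‖ ≤ (n : ℝ)}
        = (fun ω => γo ω i) ⁻¹' Metric.closedBall 0 (n : ℝ) := by
      ext ω; simp [Metric.mem_closedBall, dist_zero_right]
    rw [hset]
    exact (hγoMeas i) measurableSet_closedBall
  -- g : the directional term for the constant deviation a
  set g : Ω → ℝ := fun ω => ⟪q i ω, a - γo ω i⟫ with hgdef
  have hgInt : Integrable g P := by
    have hγcAdm : Admissible (fun ω => Function.update (γo ω) i a) := by
      refine (hAdm _).mpr ⟨fun j => ?_, fun ω j => ?_⟩
      · rcases eq_or_ne j i with rfl | hj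
        · simpa only [Function.update_self] using measurable_const
        · simp only [Function.update_of_ne hj]; exact hγoMeas j
      · rcases eq_or_ne j i with rfl | hj
        · simpa only [Function.update_self] using ha
        · simp only [Function.update_of_ne hj]; exact hγoMem ω j
    have := hdirInt _ hγcAdm i
    simpa only [Function.update_self] using this
  -- coordinate integrability
  have hq_k : ∀ k, Integrable (fun ω => q i ω k) P := fun k =>
    (EuclideanSpace.proj k (𝕜 := ℝ)).integrable_comp (hqInt i)
  have hcond_k : ∀ k, Integrable (fun ω => (P[q i | G i]) ω k) P := fun k =>
    (EuclideanSpace.proj k (𝕜 := ℝ)).integrable_comp hcondInt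
  -- each truncation set is null
  have hBnull : ∀ n, P (B n) = 0 := by
    intro n
    -- the coordinate functions of the truncated deviation
    set φ : Fin (d i) → Ω → ℝ :=
      fun k => (B n).indicator (fun ω => (a - γo ω i) k) with hφdef
    have hφm : ∀ k, StronglyMeasurable[G i] (φ k) := fun k =>
      (((EuclideanSpace.proj k (𝕜 := ℝ)).continuous.measurable.comp hcm).indicator
        (hB n)).stronglyMeasurable
    have hφbd : ∀ k ω, ‖φ k ω‖ ≤ ‖a‖ + n := by
      intro k ω
      simp only [hφdef, Real.norm_eq_abs]
      by_cases h : ω ∈ B n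
      · rw [Set.indicator_of_mem h]
        calc |(a - γo ω i) k| ≤ ‖a - γo ω i‖ := euclid_abs_coord_le_norm _ k
          _ ≤ ‖a‖ + ‖γo ω i‖ := norm_sub_le _ _
          _ ≤ ‖a‖ + n := by have : ‖γo ω i‖ ≤ n := h.2; linarith
      · rw [Set.indicator_of_notMem h]
        simp only [abs_zero]
        positivity
    have hφq : ∀ k, Integrable (fun ω => φ k ω * q i ω k) P := fun k =>
      (hq_k k).bdd_mul (((hφm k).mono hm).aestronglyMeasurable)
        (Filter.Eventually.of_forall fun ω => hφbd k ω)
    have hφc : ∀ k, Integrable (fun ω => φ k ω * (P[q i | G i]) ω k) P := fun k =>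
      (hcond_k k).bdd_mul (((hφm k).mono hm).aestronglyMeasurable)
        (Filter.Eventually.of_forall fun ω => hφbd k ω)
    -- the strategy deviating to `a` on `B n`
    have hγnAdm : Admissible (fun ω =>
        Function.update (γo ω) i (if ω ∈ B n then a else γo ω i)) := by
      refine (hAdm _).mpr ⟨fun j => ?_, fun ω j => ?_⟩
      · rcases eq_or_ne j i with rfl | hj
        · simp only [Function.update_self]
          exact Measurable.ite (hB n) measurable_const (hγoMeas j)
        · simp only [Function.update_of_ne hj]; exact hγoMeas j
      · rcases eq_or_ne j i with rfl | hj
        · simp only [Function.update_self]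
          split_ifs
          · exact ha
          · exact hγoMem ω j
        · simp only [Function.update_of_ne hj]; exact hγoMem ω j
    -- the VI applied to this strategy
    have hVIn := hVI _ hγnAdm
    have hsum : ∀ ω, (∑ j, ⟪q j ω,
        Function.update (γo ω) i (if ω ∈ B n then a else γo ω i) j - γo ω j⟫)
        = Set.indicator (B n) g ω := by
      intro ω
      rw [Finset.sum_eq_single i]
      · by_cases h : ω ∈ B n
        · simp only [Function.update_self, if_pos h, Set.indicator_of_mem h, hgdef]
        · simp only [Function.update_self, if_neg h, Set.indicator_of_notMem h,
            sub_self, inner_zero_right]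
      · intro j _ hj
        simp only [Function.update_of_ne hj, sub_self, inner_zero_right]
      · intro h; exact absurd (Finset.mem_univ i) h
    rw [integral_congr_ae (Filter.EventuallyEq.of_eq (funext hsum))] at hVIn
    -- rewrite the indicator integral coordinatewise
    have key1 : ∀ ω, Set.indicator (B n) g ω = ∑ k, φ k ω * q i ω k := by
      intro ω
      by_cases h : ω ∈ B n
      · simp only [Set.indicator_of_mem h, hgdef, hφdef, PiLp.inner_apply,
          RCLike.inner_apply, conj_trivial]
      · simp only [Set.indicator_of_notMem h, hφdef, zero_mul,
          Finset.sum_const_zero]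
    have key2 : ∀ ω, Set.indicator (B n) f ω = ∑ k, φ k ω * (P[q i | G i]) ω k := by
      intro ω
      by_cases h : ω ∈ B n
      · simp only [Set.indicator_of_mem h, hfdef, hφdef, PiLp.inner_apply,
          RCLike.inner_apply, conj_trivial]
      · simp only [Set.indicator_of_notMem h, hφdef, zero_mul,
          Finset.sum_const_zero]
    -- transfer the inequality to the conditional expectation
    have hswap : ∀ k, ∫ ω, φ k ω * q i ω k ∂P
        = ∫ ω, φ k ω * (P[q i | G i]) ω k ∂P := by
      intro k
      have hpull : P[(fun ω => φ k ω * q i ω k) | G i]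
          =ᵐ[P] fun ω => φ k ω * (P[(fun ω => q i ω k) | G i]) ω :=
        condExp_mul_of_stronglyMeasurable_left (hφm k) (hφq k) (hq_k k)
      have hco := condexp_euclidean_coord_aux P hm (q i) (hqInt i) k
      calc ∫ ω, φ k ω * q i ω k ∂P
          = ∫ ω, (P[(fun ω => φ k ω * q i ω k) | G i]) ω ∂P :=
            (integral_condExp hm).symm
        _ = ∫ ω, φ k ω * (P[(fun ω => q i ω k) | G i]) ω ∂P :=
            integral_congr_ae hpull
        _ = ∫ ω, φ k ω * (P[q i | G i]) ω k ∂P := by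
            refine integral_congr_ae ?_
            filter_upwards [hco] with ω hω
            rw [hω]
    have hfin : 0 ≤ ∫ ω, Set.indicator (B n) f ω ∂P := by
      calc (0:ℝ) ≤ ∫ ω, Set.indicator (B n) g ω ∂P := hVIn
        _ = ∫ ω, ∑ k, φ k ω * q i ω k ∂P := by
            exact integral_congr_ae (Filter.EventuallyEq.of_eq (funext key1))
        _ = ∑ k, ∫ ω, φ k ω * q i ω k ∂P :=
            integral_finset_sum _ fun k _ => hφq k
        _ = ∑ k, ∫ ω, φ k ω * (P[q i | G i]) ω k ∂P :=
            Finset.sum_congr rfl fun k _ => hswap k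
        _ = ∫ ω, ∑ k, φ k ω * (P[q i | G i]) ω k ∂P :=
            (integral_finset_sum _ fun k _ => hφc k).symm
        _ = ∫ ω, Set.indicator (B n) f ω ∂P := by
            exact integral_congr_ae (Filter.EventuallyEq.of_eq (funext fun ω =>
              (key2 ω).symm))
    have hIf : Integrable (fun ω => Set.indicator (B n) f ω) P := by
      have : (fun ω => Set.indicator (B n) f ω)
          = fun ω => ∑ k, φ k ω * (P[q i | G i]) ω k := funext key2
      rw [this]
      exact integrable_finset_sum _ fun k _ => hφc k
    have hle0 : ∫ ω, Set.indicator (B n) f ω ∂P ≤ 0 := by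
      refine integral_nonpos fun ω => ?_
      by_cases h : ω ∈ B n
      · rw [Set.indicator_of_mem h]; exact le_of_lt h.1
      · rw [Set.indicator_of_notMem h]; exact le_rfl
    have hzero : ∫ ω, -Set.indicator (B n) f ω ∂P = 0 := by
      rw [integral_neg, le_antisymm hle0 hfin, neg_zero]
    have hInt' : Integrable (fun ω => -Set.indicator (B n) f ω) P := hIf.neg
    have hnonneg : 0 ≤ fun ω => -Set.indicator (B n) f ω := by
      intro ω
      show (0:ℝ) ≤ -Set.indicator (B n) f ω
      rw [neg_nonneg]
      by_cases h : ω ∈ B n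
      · rw [Set.indicator_of_mem h]; exact le_of_lt h.1
      · rw [Set.indicator_of_notMem h]
    have hae : (fun ω => -Set.indicator (B n) f ω) =ᵐ[P] 0 :=
      (integral_eq_zero_iff_of_nonneg hnonneg hInt').mp hzero
    have haeB : ∀ᵐ ω ∂P, ω ∉ B n := by
      filter_upwards [hae] with ω hω
      intro h
      rw [Pi.zero_apply, neg_eq_zero, Set.indicator_of_mem h] at hω
      exact absurd hω (ne_of_lt h.1)
    rw [ae_iff] at haeB
    simpa only [not_not, Set.setOf_mem_eq] using haeB
  -- conclusion
  have hsub : {ω | f ω < 0} ⊆ ⋃ n, B n := by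
    intro ω hω
    obtain ⟨n, hn⟩ := exists_nat_ge ‖γo ω i‖
    exact Set.mem_iUnion.mpr ⟨n, hω, hn⟩
  have hnull : P {ω | f ω < 0} = 0 :=
    measure_mono_null hsub (measure_iUnion_null hBnull)
  rw [ae_iff]
  simpa only [not_le] using hnull
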